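/- Let G be a simple graph on a finite vertex set V, let w assign to each edge of G a nonnegative real weight, let s ≠ t be vertices of G such that at least one s–t path exists in G, set M = Σ over all edges e of G of w(e), and let L ∈ ℝ with L < M. For an s–t path P, let E(P) denote its set of edges and w(P) = Σ_{e∈E(P)} w(e). Consider costs c_δ(P) = Σ_{e∈E(P)} (w(e) + δ_e·M) for δ ∈ {0,1}^{E(G)} with Σ_e δ_e ≤ 1. Then min over pairs (P,Q) of s–t paths in G of max over such δ of min(c_δ(P), c_δ(Q)) is at most L if and only if there exist two s–t paths P, Q in G with E(P) ∩ E(Q) = ∅, w(P) ≤ L and w(Q) ≤ L. -/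

import Mathlib

open Finset

private lemma walk_exists_edge {V : Type*} {G : SimpleGraph V} {s t : V} (h : s ≠ t)
    (p : G.Walk s t) : ∃ e, e ∈ p.edges := by
  cases p with
  | nil => exact absurd rfl h
  | cons h' q => exact ⟨_, List.mem_cons_self⟩

/-- correctness of the reduction from the min-max two edge-disjoint
paths problem to the min-max-min shortest path problem with `Γ = 1` and `K = 2`:
with every edge's deviation equal to `M = ∑_e w(e)` and `L < M`, the min-max-min
value is at most `L` iff there are two edge-disjoint `s`–`t` paths of weight at
most `L` each. -/
theorem minmaxmin_shortest_path_reduction {V : Type*} [Fintype V] [DecidableEq V]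
    (G : SimpleGraph V) [DecidableRel G.Adj]
    (w : Sym2 V → ℝ) (hw : ∀ e ∈ G.edgeSet, 0 ≤ w e)
    (s t : V) (hst : s ≠ t) (hpath : Nonempty (G.Path s t))
    (L : ℝ) (hL : L < ∑ e ∈ G.edgeFinset, w e) :
    ((Finset.univ : Finset (G.Path s t × G.Path s t)).inf'
        (Finset.univ_nonempty_iff.mpr ⟨hpath.some, hpath.some⟩)
        fun pq => (G.edgeFinset.powerset.filter fun D => D.card ≤ 1).sup'
          ⟨∅, by simp⟩
          fun D => min
            (∑ e ∈ pq.1.1.edges.toFinset,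
              (w e + if e ∈ D then ∑ e' ∈ G.edgeFinset, w e' else 0))
            (∑ e ∈ pq.2.1.edges.toFinset,
              (w e + if e ∈ D then ∑ e' ∈ G.edgeFinset, w e' else 0))) ≤ L ↔
    ∃ P Q : G.Path s t,
      Disjoint P.1.edges.toFinset Q.1.edges.toFinset ∧
      (∑ e ∈ P.1.edges.toFinset, w e) ≤ L ∧
      (∑ e ∈ Q.1.edges.toFinset, w e) ≤ L := by
  classical
  set M := ∑ e ∈ G.edgeFinset, w e with hM
  have hsub : ∀ (P : G.Path s t), P.1.edges.toFinset ⊆ G.edgeFinset := by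
    intro P e he
    rw [List.mem_toFinset] at he
    exact SimpleGraph.mem_edgeFinset.mpr (P.1.edges_subset_edgeSet he)
  have hwnn : ∀ (P : G.Path s t), 0 ≤ ∑ e ∈ P.1.edges.toFinset, w e := fun P =>
    Finset.sum_nonneg fun e he => hw e (SimpleGraph.mem_edgeFinset.mp (hsub P he))
  -- cost when no deviated edge is on the path
  have hcost0 : ∀ (P : G.Path s t) (D : Finset (Sym2 V)),
      (∀ e ∈ P.1.edges.toFinset, e ∉ D) →
      ∑ e ∈ P.1.edges.toFinset, (w e + if e ∈ D then M else 0)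
        = ∑ e ∈ P.1.edges.toFinset, w e := by
    intro P D h
    refine Finset.sum_congr rfl fun e he => ?_
    rw [if_neg (h e he), add_zero]
  -- cost when the deviated edge is on the path
  have hcostM : ∀ (P : G.Path s t) (e : Sym2 V), e ∈ P.1.edges.toFinset →
      M ≤ ∑ e' ∈ P.1.edges.toFinset,
        (w e' + if e' ∈ ({e} : Finset (Sym2 V)) then M else 0) := by
    intro P e he
    rw [Finset.sum_add_distrib]
    have h1 : ∑ e' ∈ P.1.edges.toFinset,
        (if e' ∈ ({e} : Finset (Sym2 V)) then M else 0) = M := by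
      simp only [Finset.mem_singleton]
      rw [Finset.sum_ite_eq' P.1.edges.toFinset e (fun _ => M), if_pos he]
    rw [h1]
    linarith [hwnn P]
  have hsingleton_mem : ∀ (P : G.Path s t) (e : Sym2 V), e ∈ P.1.edges.toFinset →
      ({e} : Finset (Sym2 V)) ∈ G.edgeFinset.powerset.filter fun D => D.card ≤ 1 := by
    intro P e he
    exact Finset.mem_filter.mpr
      ⟨Finset.mem_powerset.mpr (Finset.singleton_subset_iff.mpr (hsub P he)), by simp⟩
  constructor
  · intro h
    rw [Finset.inf'_le_iff] at h
    obtain ⟨⟨P, Q⟩, -, hPQ⟩ := h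
    replace hPQ := (Finset.sup'_le_iff (H := _) (f := _)).mp hPQ
    obtain ⟨eP, heP⟩ := walk_exists_edge hst P.1
    obtain ⟨eQ, heQ⟩ := walk_exists_edge hst Q.1
    rw [← List.mem_toFinset] at heP heQ
    -- disjointness
    have hdisj : Disjoint P.1.edges.toFinset Q.1.edges.toFinset := by
      rw [Finset.disjoint_left]
      intro e heP' heQ'
      have h1 := hPQ {e} (hsingleton_mem P e heP')
      have h2 := hcostM P e heP'
      have h3 := hcostM Q e heQ'
      simp only [min_le_iff] at h1
      rcases h1 with h1 | h1 <;> linarith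
    refine ⟨P, Q, hdisj, ?_, ?_⟩
    · have h1 := hPQ {eQ} (hsingleton_mem Q eQ heQ)
      have h3 := hcostM Q eQ heQ
      have h0 : ∑ e ∈ P.1.edges.toFinset, (w e + if e ∈ ({eQ} : Finset (Sym2 V)) then M else 0)
          = ∑ e ∈ P.1.edges.toFinset, w e := by
        refine hcost0 P _ fun e he hmem => ?_
        rw [Finset.mem_singleton] at hmem
        subst hmem
        exact (Finset.disjoint_left.mp hdisj he) heQ
      rw [h0] at h1
      simp only [min_le_iff] at h1
      rcases h1 with h1 | h1 <;> linarith
    · have h1 := hPQ {eP} (hsingleton_mem P eP heP)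
      have h3 := hcostM P eP heP
      have h0 : ∑ e ∈ Q.1.edges.toFinset, (w e + if e ∈ ({eP} : Finset (Sym2 V)) then M else 0)
          = ∑ e ∈ Q.1.edges.toFinset, w e := by
        refine hcost0 Q _ fun e he hmem => ?_
        rw [Finset.mem_singleton] at hmem
        subst hmem
        exact (Finset.disjoint_left.mp hdisj heP) he
      rw [h0] at h1
      simp only [min_le_iff] at h1
      rcases h1 with h1 | h1 <;> linarith
  · rintro ⟨P, Q, hdisj, hP, hQ⟩
    refine le_trans (Finset.inf'_le _ (Finset.mem_univ (P, Q))) ?_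
    refine (Finset.sup'_le_iff (H := _) (f := _)).mpr ?_
    intro D hD
    rw [Finset.mem_filter, Finset.mem_powerset] at hD
    by_cases hcase : ∀ e ∈ P.1.edges.toFinset, e ∉ D
    · exact le_trans (min_le_left _ _) (le_of_eq_of_le (hcost0 P D hcase) hP)
    · push_neg at hcase
      obtain ⟨e, heP, heD⟩ := hcase
      have hDe : D = {e} :=
        Finset.eq_singleton_iff_unique_mem.mpr
          ⟨heD, fun x hx => Finset.card_le_one.mp hD.2 x hx e heD⟩
      subst hDe
      refine le_trans (min_le_right _ _) (le_of_eq_of_le ?_ hQ)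
      refine hcost0 Q _ fun e' he' hmem => ?_
      rw [Finset.mem_singleton] at hmem
      subst hmem
      exact (Finset.disjoint_right.mp hdisj he') heP
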